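/- Let F be a linear subspace of ℝⁿ with orthogonal projection Π, let σ > 0, 0 < α < 1 and f ∈ F. Then for Y ~ P_f, P_f( max_{1≤i≤n} |(ΠY)_i − f_i| ≤ σ·Ω_F·Φ⁻¹(1 − α/(2n)) ) ≥ 1 − α. Consequently, the fixed-width band ΠY ± σ·Ω_F·Φ⁻¹(1 − α/(2n))·𝟙 (𝟙 the all-ones vector) has uniform coverage at least 1 − α over F. -/

import Mathlib

open MeasureTheory ProbabilityTheory Real
open scoped NNReal ENNReal

noncomputable section

/-- Product Gaussian measure `N(f, σ² Iₙ)` on `ℝⁿ`. -/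
def gaussP (n : ℕ) (f : Fin n → ℝ) (σ : ℝ) : Measure (Fin n → ℝ) :=
  Measure.pi fun i => gaussianReal (f i) (Real.toNNReal (σ ^ 2))

/-- Standard normal CDF `Φ`. -/
def stdCDF (x : ℝ) : ℝ := ((gaussianReal 0 1) (Set.Iic x)).toReal

/-- Standard normal density `φ`. -/
def stdPDF (x : ℝ) : ℝ := Real.exp (-(x ^ 2) / 2) / Real.sqrt (2 * Real.pi)

/-- `τ(ε) = Φ(ε/2) - Φ(-ε/2)`. -/
def tau (ε : ℝ) : ℝ := stdCDF (ε / 2) - stdCDF (-(ε / 2))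

/-- Inverse of `τ`. -/
def tauInv (p : ℝ) : ℝ := Function.invFun tau p

/-- Standard normal quantile function `Φ⁻¹`. -/
def PhiInv (p : ℝ) : ℝ := Function.invFun stdCDF p

/-- Normalized Euclidean norm `‖v‖ = √((1/n) ∑ vᵢ²)`. -/
def norm2 (n : ℕ) (v : Fin n → ℝ) : ℝ := Real.sqrt ((∑ i, (v i) ^ 2) / n)

/-- Sup norm `‖v‖_∞ = maxᵢ |vᵢ|`. -/
def normInf (n : ℕ) (v : Fin n → ℝ) : ℝ := ⨆ i, |v i|

/-- Normalized inner product. -/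
def inner2 (n : ℕ) (u v : Fin n → ℝ) : ℝ := (∑ i, u i * v i) / n

/-- Total variation distance between two measures on `ℝⁿ`. -/
def dTV (n : ℕ) (P Q : Measure (Fin n → ℝ)) : ℝ :=
  ⨆ A : {A : Set (Fin n → ℝ) // MeasurableSet A}, |(P A).toReal - (Q A).toReal|

/-- Width of the band `(L, U)` at data `y`. -/
def width (n : ℕ) (L U : (Fin n → ℝ) → Fin n → ℝ) (y : Fin n → ℝ) : ℝ :=
  ⨆ i, (U y i - L y i)

/-- The band `(L,U)` covers `g` at data `y`. -/
def covers (n : ℕ) (L U : (Fin n → ℝ) → Fin n → ℝ) (g y : Fin n → ℝ) : Prop :=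
  ∀ i, L y i ≤ g i ∧ g i ≤ U y i

/-- `P` is the orthogonal projection onto the subspace `F` of `ℝⁿ`. -/
def IsOrthProjOn (n : ℕ) (F : Submodule ℝ (Fin n → ℝ))
    (P : (Fin n → ℝ) →ₗ[ℝ] (Fin n → ℝ)) : Prop :=
  (∀ f, P f ∈ F) ∧ (∀ f, ∀ g ∈ F, inner2 n (f - P f) g = 0)

/-- `Ω_F = max_i ‖Π_F eᵢ‖ / ‖eᵢ‖`. -/
def OmegaF (n : ℕ) (P : (Fin n → ℝ) →ₗ[ℝ] (Fin n → ℝ)) : ℝ :=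
  ⨆ i : Fin n, norm2 n (P (Pi.single i 1)) / norm2 n (Pi.single i 1)

/-- The `p`-quantile of the chi-squared distribution with `m` degrees of freedom. -/
def chiSqQuantile (m : ℕ) (p : ℝ) : ℝ :=
  sInf {t : ℝ | ENNReal.ofReal p ≤
    (Measure.pi fun _ : Fin m => gaussianReal 0 1) {z | ∑ k, (z k) ^ 2 ≤ t}}


lemma conv_pdf (μ₁ μ₂ : ℝ) (v₁ v₂ : ℝ≥0) (h1 : v₁ ≠ 0) (h2 : v₂ ≠ 0) (y : ℝ) :
    ∫ x, gaussianPDFReal μ₁ v₁ x * gaussianPDFReal μ₂ v₂ (y - x) =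
      gaussianPDFReal (μ₁ + μ₂) (v₁ + v₂) y := by
  have hv1 : (0:ℝ) < (v₁:ℝ) := by exact_mod_cast pos_iff_ne_zero.mpr h1
  have hv2 : (0:ℝ) < (v₂:ℝ) := by exact_mod_cast pos_iff_ne_zero.mpr h2
  set V₁ : ℝ := (v₁:ℝ) with hV1
  set V₂ : ℝ := (v₂:ℝ) with hV2
  have hv1' : V₁ ≠ 0 := hv1.ne'
  have hv2' : V₂ ≠ 0 := hv2.ne'
  have hv12 : V₁ + V₂ ≠ 0 := by positivity
  set A : ℝ := (V₁+V₂)/(2*V₁*V₂) with hA_def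
  set d : ℝ := (V₂*μ₁+V₁*(y-μ₂))/(V₁+V₂) with hd_def
  set E : ℝ := -(y-μ₁-μ₂)^2/(2*(V₁+V₂)) with hE_def
  have hA : 0 < A := by positivity
  have key : ∀ x, gaussianPDFReal μ₁ v₁ x * gaussianPDFReal μ₂ v₂ (y - x)
      = ((Real.sqrt (2*π*V₁))⁻¹ * (Real.sqrt (2*π*V₂))⁻¹ * rexp E) * rexp (-A*(x-d)^2) := by
    intro x
    unfold gaussianPDFReal
    have hexp : -(x - μ₁)^2/(2*V₁) + -(y - x - μ₂)^2/(2*V₂) = E + (-A*(x-d)^2) := by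
      rw [hE_def, hA_def, hd_def]
      field_simp
      ring
    rw [mul_mul_mul_comm, ← Real.exp_add, hexp, Real.exp_add]
    ring
  simp only [key]
  rw [MeasureTheory.integral_const_mul]
  have htrans : ∫ x, rexp (-A*(x-d)^2) = Real.sqrt (π/A) := by
    rw [← integral_gaussian A]
    exact integral_sub_right_eq_self (fun x => rexp (-A*x^2)) d
  rw [htrans]
  have hconst : (Real.sqrt (2*π*V₁))⁻¹ * (Real.sqrt (2*π*V₂))⁻¹ * Real.sqrt (π/A)
      = (Real.sqrt (2*π*(V₁+V₂)))⁻¹ := by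
    have h1' : (0:ℝ) < 2*π*V₁ := by positivity
    have h2' : (0:ℝ) < 2*π*V₂ := by positivity
    have h3' : (0:ℝ) < 2*π*(V₁+V₂) := by positivity
    rw [show π / A = (2*π*V₁) * (2*π*V₂) / (2*π*(V₁+V₂)) by rw [hA_def]; field_simp]
    rw [Real.sqrt_div (by positivity), Real.sqrt_mul h1'.le]
    have e1 : Real.sqrt (2*π*V₁) ≠ 0 := (Real.sqrt_pos.mpr h1').ne'
    have e2 : Real.sqrt (2*π*V₂) ≠ 0 := (Real.sqrt_pos.mpr h2').ne'
    have e3 : Real.sqrt (2*π*(V₁+V₂)) ≠ 0 := (Real.sqrt_pos.mpr h3').ne'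
    field_simp
  calc ((Real.sqrt (2*π*V₁))⁻¹ * (Real.sqrt (2*π*V₂))⁻¹ * rexp E) * Real.sqrt (π/A)
      = ((Real.sqrt (2*π*V₁))⁻¹ * (Real.sqrt (2*π*V₂))⁻¹ * Real.sqrt (π/A)) * rexp E := by ring
    _ = (Real.sqrt (2*π*(V₁+V₂)))⁻¹ * rexp E := by rw [hconst]
    _ = gaussianPDFReal (μ₁ + μ₂) (v₁ + v₂) y := by
        unfold gaussianPDFReal
        push_cast
        rw [hE_def]
        congr 2
        ring

lemma measurable_gaussianPDF' (μ : ℝ) (v : ℝ≥0) : Measurable (gaussianPDF μ v) :=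
  (measurable_gaussianPDFReal μ v).ennreal_ofReal

lemma gaussianPDFReal_le (μ : ℝ) (v : ℝ≥0) (x : ℝ) :
    gaussianPDFReal μ v x ≤ (Real.sqrt (2*π*v))⁻¹ := by
  rw [gaussianPDFReal]
  have h1 : rexp (-(x - μ)^2 / (2*v)) ≤ 1 := by
    rw [Real.exp_le_one_iff]
    apply div_nonpos_of_nonpos_of_nonneg (neg_nonpos_of_nonneg (sq_nonneg _))
    positivity
  calc (Real.sqrt (2*π*↑v))⁻¹ * rexp (-(x - μ)^2 / (2*↑v))
      ≤ (Real.sqrt (2*π*↑v))⁻¹ * 1 := by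
        apply mul_le_mul_of_nonneg_left h1 (by positivity)
    _ = (Real.sqrt (2*π*↑v))⁻¹ := mul_one _

lemma gaussianReal_conv (μ₁ μ₂ : ℝ) (v₁ v₂ : ℝ≥0) :
    ((gaussianReal μ₁ v₁).prod (gaussianReal μ₂ v₂)).map (fun p : ℝ × ℝ => p.1 + p.2)
      = gaussianReal (μ₁ + μ₂) (v₁ + v₂) := by
  by_cases h1 : v₁ = 0
  · subst h1
    rw [gaussianReal_zero_var, Measure.dirac_prod,
      Measure.map_map (by fun_prop) (by fun_prop)]
    have : ((fun p : ℝ × ℝ => p.1 + p.2) ∘ (Prod.mk μ₁)) = (fun y => y + μ₁) := by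
      ext y; simp [add_comm]
    rw [this, gaussianReal_map_add_const, add_comm μ₂ μ₁, zero_add]
  by_cases h2 : v₂ = 0
  · subst h2
    rw [gaussianReal_zero_var, Measure.prod_dirac,
      Measure.map_map (by fun_prop) (by fun_prop)]
    have : ((fun p : ℝ × ℝ => p.1 + p.2) ∘ (fun x => (x, μ₂))) = (fun x => x + μ₂) := rfl
    rw [this, gaussianReal_map_add_const, add_zero]
  have h12 : v₁ + v₂ ≠ 0 := fun h => h1 (by simpa using (add_eq_zero.mp h).1)
  have hmeas_add : Measurable (fun p : ℝ × ℝ => p.1 + p.2) := by fun_prop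
  ext s hs
  have hindeq : (fun p : ℝ×ℝ => s.indicator (fun u => gaussianPDF μ₂ v₂ (u - p.1)) p.2)
      = (fun p : ℝ×ℝ => (Prod.snd ⁻¹' s).indicator
        (fun q : ℝ×ℝ => gaussianPDF μ₂ v₂ (q.2 - q.1)) p) := by
    funext p; by_cases hp : p.2 ∈ s <;> simp [Set.indicator, hp]
  have hmeasP : Measurable (fun p : ℝ×ℝ =>
      s.indicator (fun u => gaussianPDF μ₂ v₂ (u - p.1)) p.2) := by
    rw [hindeq]
    exact ((measurable_gaussianPDF' μ₂ v₂).comp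
      (measurable_snd.sub measurable_fst)).indicator (measurable_snd hs)
  have hF : Measurable (fun x : ℝ => ∫⁻ y, s.indicator (fun u => gaussianPDF μ₂ v₂ (u - x)) y) :=
    Measurable.lintegral_prod_right' hmeasP
  rw [Measure.map_apply hmeas_add hs, Measure.prod_apply (hmeas_add hs)]
  have step1 : ∀ x, (gaussianReal μ₂ v₂) (Prod.mk x ⁻¹' ((fun p : ℝ×ℝ => p.1 + p.2) ⁻¹' s))
      = ∫⁻ y, s.indicator (fun u => gaussianPDF μ₂ v₂ (u - x)) y := by
    intro x
    have hpre : Prod.mk x ⁻¹' ((fun p : ℝ×ℝ => p.1+p.2) ⁻¹' s) = (fun y => x + y) ⁻¹' s := rfl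
    have hpm : MeasurableSet ((fun y => x + y) ⁻¹' s) := (measurable_const_add x) hs
    rw [hpre, gaussianReal_of_var_ne_zero _ h2, withDensity_apply _ hpm,
      ← lintegral_indicator hpm]
    rw [← lintegral_add_right_eq_self
      (fun y => ((fun y => x + y) ⁻¹' s).indicator (gaussianPDF μ₂ v₂) y) (-x)]
    apply lintegral_congr
    intro y
    by_cases hy : y ∈ s
    · have h' : y + -x ∈ (fun y => x + y) ⁻¹' s := by simp [hy]
      rw [Set.indicator_of_mem h', Set.indicator_of_mem hy]
      norm_num [sub_eq_add_neg]
    · have h' : y + -x ∉ (fun y => x + y) ⁻¹' s := by simp [hy]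
      rw [Set.indicator_of_notMem h', Set.indicator_of_notMem hy]
  calc ∫⁻ x, (gaussianReal μ₂ v₂) (Prod.mk x ⁻¹' ((fun p : ℝ×ℝ => p.1 + p.2) ⁻¹' s))
        ∂(gaussianReal μ₁ v₁)
      = ∫⁻ x, (∫⁻ y, s.indicator (fun u => gaussianPDF μ₂ v₂ (u - x)) y)
        ∂(gaussianReal μ₁ v₁) := lintegral_congr step1
    _ = ∫⁻ x, gaussianPDF μ₁ v₁ x
        * (∫⁻ y, s.indicator (fun u => gaussianPDF μ₂ v₂ (u - x)) y) := by
        rw [gaussianReal_of_var_ne_zero _ h1,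
          lintegral_withDensity_eq_lintegral_mul _ (measurable_gaussianPDF' μ₁ v₁) hF]
        rfl
    _ = ∫⁻ x, ∫⁻ y, gaussianPDF μ₁ v₁ x * s.indicator (fun u => gaussianPDF μ₂ v₂ (u - x)) y := by
        apply lintegral_congr
        intro x
        rw [lintegral_const_mul]
        exact ((measurable_gaussianPDF' μ₂ v₂).comp
          (measurable_id.sub measurable_const)).indicator hs
    _ = ∫⁻ y, ∫⁻ x, gaussianPDF μ₁ v₁ x * s.indicator (fun u => gaussianPDF μ₂ v₂ (u - x)) y := by
        apply lintegral_lintegral_swap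
        exact (((measurable_gaussianPDF' μ₁ v₁).comp measurable_fst).mul hmeasP).aemeasurable
    _ = ∫⁻ y, s.indicator (gaussianPDF (μ₁+μ₂) (v₁+v₂)) y := by
        apply lintegral_congr
        intro y
        by_cases hy : y ∈ s
        · rw [Set.indicator_of_mem hy]
          have hptwise : ∀ x : ℝ, gaussianPDF μ₁ v₁ x
              * s.indicator (fun u => gaussianPDF μ₂ v₂ (u - x)) y
              = ENNReal.ofReal (gaussianPDFReal μ₁ v₁ x * gaussianPDFReal μ₂ v₂ (y - x)) := by
            intro x
            rw [Set.indicator_of_mem hy, ENNReal.ofReal_mul (gaussianPDFReal_nonneg μ₁ v₁ x)]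
            rfl
          refine (lintegral_congr hptwise).trans ?_
          have hint : Integrable (fun x => gaussianPDFReal μ₁ v₁ x
              * gaussianPDFReal μ₂ v₂ (y - x)) := by
            have heq : (fun x => gaussianPDFReal μ₁ v₁ x * gaussianPDFReal μ₂ v₂ (y - x))
                = (fun x => gaussianPDFReal μ₂ v₂ (y - x) * gaussianPDFReal μ₁ v₁ x) := by
              funext x; ring
            rw [heq]
            apply Integrable.bdd_mul (c := (Real.sqrt (2*π*v₂))⁻¹) (integrable_gaussianPDFReal μ₁ v₁)
            · exact ((measurable_gaussianPDFReal μ₂ v₂).comp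
                (measurable_const.sub measurable_id)).aestronglyMeasurable
            · refine ae_of_all _ (fun x => ?_)
              rw [Real.norm_eq_abs, abs_of_nonneg (gaussianPDFReal_nonneg _ _ _)]
              exact gaussianPDFReal_le μ₂ v₂ (y - x)
          rw [← ofReal_integral_eq_lintegral_ofReal hint
            (ae_of_all _ (fun x => mul_nonneg (gaussianPDFReal_nonneg _ _ _)
              (gaussianPDFReal_nonneg _ _ _)))]
          rw [conv_pdf μ₁ μ₂ v₁ v₂ h1 h2 y]
          rfl
        · have hz : ∀ x : ℝ, gaussianPDF μ₁ v₁ x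
              * s.indicator (fun u => gaussianPDF μ₂ v₂ (u - x)) y = 0 := by
            intro x; rw [Set.indicator_of_notMem hy, mul_zero]
          rw [Set.indicator_of_notMem hy, lintegral_congr hz, lintegral_zero]
    _ = gaussianReal (μ₁+μ₂) (v₁+v₂) s := by
        rw [gaussianReal_of_var_ne_zero _ h12, withDensity_apply _ hs, ← lintegral_indicator hs]

lemma measurable_lin {n : ℕ} (a : Fin n → ℝ) :
    Measurable (fun y : Fin n → ℝ => ∑ i, a i * y i) :=
  Finset.measurable_sum Finset.univ (fun i _ => (measurable_const_mul (a i)).comp (measurable_pi_apply i))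

lemma gauss_pi_lin (n : ℕ) (a f : Fin n → ℝ) (v : ℝ≥0) :
    (Measure.pi fun i => gaussianReal (f i) v).map (fun y => ∑ i, a i * y i)
      = gaussianReal (∑ i, a i * f i) (Real.toNNReal (∑ i, a i ^ 2) * v) := by
  induction n with
  | zero =>
    have h0 : (fun y : Fin 0 → ℝ => ∑ i, a i * y i) = fun _ => (0:ℝ) := by
      funext y; simp
    rw [h0, Measure.map_const, measure_univ, one_smul]
    simp [gaussianReal_zero_var]
  | succ n ih =>
    have hmp := measurePreserving_piFinSuccAbove (fun i : Fin (n+1) => gaussianReal (f i) v) 0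
    have hGe : ((fun p : ℝ × (Fin n → ℝ) => a 0 * p.1 + ∑ j, a (Fin.succ j) * p.2 j)
        ∘ (MeasurableEquiv.piFinSuccAbove (fun _ : Fin (n+1) => ℝ) 0))
        = fun y : Fin (n+1) → ℝ => ∑ i, a i * y i := by
      funext y
      simp [MeasurableEquiv.piFinSuccAbove, Fin.sum_univ_succ, Fin.zero_succAbove, Fin.tail]
    have hmeasG : Measurable (fun p : ℝ × (Fin n → ℝ) =>
        a 0 * p.1 + ∑ j, a (Fin.succ j) * p.2 j) := by
      apply Measurable.add
      · exact measurable_fst.const_mul _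
      · exact Finset.measurable_sum Finset.univ
          (fun j _ => ((measurable_pi_apply j).comp measurable_snd).const_mul _)
    rw [← hGe, ← Measure.map_map hmeasG (MeasurableEquiv.measurable _), hmp.map_eq]
    have htail : (Measure.pi fun j : Fin n =>
        gaussianReal (f ((0 : Fin (n+1)).succAbove j)) v)
        = Measure.pi fun j : Fin n => gaussianReal (f (Fin.succ j)) v := by
      simp [Fin.zero_succAbove]
    rw [htail]
    have hG : (fun p : ℝ × (Fin n → ℝ) => a 0 * p.1 + ∑ j, a (Fin.succ j) * p.2 j)
        = (fun q : ℝ × ℝ => q.1 + q.2) ∘ (Prod.map (fun x : ℝ => a 0 * x)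
          (fun z : Fin n → ℝ => ∑ j, a (Fin.succ j) * z j)) := rfl
    rw [hG, ← Measure.map_map (by fun_prop) ((measurable_const_mul _).prodMap
      (measurable_lin _)),
      ← Measure.map_prod_map _ _ (measurable_const_mul _) (measurable_lin _),
      gaussianReal_map_const_mul, ih (fun j => a (Fin.succ j)) (fun j => f (Fin.succ j)),
      gaussianReal_conv]
    congr 1
    · rw [Fin.sum_univ_succ fun i => a i * f i]
    · have h1 : (0:ℝ) ≤ ∑ j, a (Fin.succ j)^2 := by positivity
      have h2 : (0:ℝ) ≤ ∑ i : Fin (n+1), a i^2 := by positivity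
      apply NNReal.coe_injective
      push_cast [Real.coe_toNNReal _ h1, Real.coe_toNNReal _ h2, NNReal.coe_mk]
      rw [Fin.sum_univ_succ fun i => a i ^ 2]
      ring


lemma gaussP_singleton (x : ℝ) : gaussianReal 0 1 {x} = 0 :=
  (gaussianReal_absolutelyContinuous 0 one_ne_zero) volume_singleton

lemma gauss_neg_map : (gaussianReal 0 1).map (fun x : ℝ => -x) = gaussianReal 0 1 := by
  have hfun : (fun x : ℝ => -x) = (fun x : ℝ => (-1:ℝ) * x) := by funext x; ring
  have h := gaussianReal_map_const_mul (μ := 0) (v := 1) (-1 : ℝ)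
  have hv : (NNReal.mk ((-1:ℝ)^2) (sq_nonneg _)) * 1 = 1 := by
    apply NNReal.coe_injective; norm_num
  rw [hv, mul_zero] at h
  rw [hfun]
  exact h

lemma gauss_Iic_neg (q : ℝ) :
    gaussianReal 0 1 (Set.Iic (-q)) = gaussianReal 0 1 (Set.Ici q) := by
  calc gaussianReal 0 1 (Set.Iic (-q))
      = ((gaussianReal 0 1).map (fun x : ℝ => -x)) (Set.Iic (-q)) := by rw [gauss_neg_map]
    _ = gaussianReal 0 1 ((fun x : ℝ => -x) ⁻¹' (Set.Iic (-q))) :=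
        Measure.map_apply measurable_neg measurableSet_Iic
    _ = gaussianReal 0 1 (Set.Ici q) := by
        congr 1; ext x; simp

lemma stdCDF_measure_Iic (x : ℝ) :
    gaussianReal 0 1 (Set.Iic x) = ENNReal.ofReal (stdCDF x) :=
  (ENNReal.ofReal_toReal (measure_ne_top _ _)).symm

lemma monotone_stdCDF : Monotone stdCDF := fun a b h =>
  ENNReal.toReal_mono (measure_ne_top _ _) (measure_mono (Set.Iic_subset_Iic.mpr h))

lemma stdCDF_zero : stdCDF 0 = 1/2 := by
  set μ := gaussianReal 0 1 with hμ
  have h1 : μ (Set.Iic 0) + μ (Set.Ioi 0) = 1 := by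
    have := measure_add_measure_compl (μ := μ) (measurableSet_Iic (a := (0:ℝ)))
    rwa [Set.compl_Iic, measure_univ] at this
  have h2 : μ (Set.Ici 0) = μ (Set.Ioi 0) := by
    apply le_antisymm
    · calc μ (Set.Ici 0) ≤ μ (Set.Ioi 0 ∪ {0}) := by
            apply measure_mono; intro x hx
            rcases lt_or_eq_of_le (Set.mem_Ici.mp hx) with h | h
            · exact Or.inl h
            · exact Or.inr (by simp [← h])
        _ ≤ μ (Set.Ioi 0) + μ {0} := measure_union_le _ _
        _ = μ (Set.Ioi 0) := by rw [hμ, gaussP_singleton, add_zero]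
    · exact measure_mono Set.Ioi_subset_Ici_self
  have h3 : μ (Set.Iic 0) = μ (Set.Ici 0) := by
    have := gauss_Iic_neg 0
    rwa [neg_zero] at this
  have h4 : μ (Set.Iic 0) + μ (Set.Iic 0) = 1 := by rw [h3, h2] at h1 ⊢; exact h1
  have h5 := congrArg ENNReal.toReal h4
  rw [ENNReal.toReal_add (measure_ne_top _ _) (measure_ne_top _ _)] at h5
  have : stdCDF 0 + stdCDF 0 = 1 := by exact h5
  linarith

lemma stdCDF_eq_integral (z : ℝ) :
    stdCDF z = ∫ t in Set.Iic z, gaussianPDFReal 0 1 t := by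
  rw [stdCDF, gaussianReal_apply_eq_integral 0 one_ne_zero, ENNReal.toReal_ofReal]
  exact setIntegral_nonneg measurableSet_Iic fun t _ => gaussianPDFReal_nonneg 0 1 t

lemma continuous_stdCDF : Continuous stdCDF := by
  have hint : Integrable (gaussianPDFReal 0 1) := integrable_gaussianPDFReal 0 1
  have key : stdCDF = fun x => (∫ t in (0:ℝ)..x, gaussianPDFReal 0 1 t) + stdCDF 0 := by
    funext x
    rw [stdCDF_eq_integral x,
      ← intervalIntegral.integral_Iic_sub_Iic hint.integrableOn hint.integrableOn,
      ← stdCDF_eq_integral 0, ← stdCDF_eq_integral x]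
    ring
  rw [key]
  exact (intervalIntegral.continuous_primitive
    (fun a b => hint.intervalIntegrable) 0).add continuous_const

lemma tendsto_stdCDF_atTop : Filter.Tendsto stdCDF Filter.atTop (nhds 1) := by
  have h := tendsto_measure_Iic_atTop (μ := gaussianReal 0 1)
  rw [measure_univ] at h
  have h2 := (ENNReal.tendsto_toReal (by norm_num : (1:ℝ≥0∞) ≠ ⊤)).comp h
  exact h2

lemma exists_stdCDF_eq (p : ℝ) (h1 : 1/2 ≤ p) (h2 : p < 1) :
    ∃ x, 0 ≤ x ∧ stdCDF x = p := by
  have hev : ∀ᶠ y in Filter.atTop, p ≤ stdCDF y :=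
    tendsto_stdCDF_atTop.eventually (eventually_ge_nhds h2)
  obtain ⟨b, hb, hb0⟩ := (hev.and (Filter.eventually_ge_atTop (0:ℝ))).exists
  have hIcc : p ∈ Set.Icc (stdCDF 0) (stdCDF b) := ⟨by rw [stdCDF_zero]; exact h1, hb⟩
  obtain ⟨x, hx, hfx⟩ := intermediate_value_Icc hb0 continuous_stdCDF.continuousOn hIcc
  exact ⟨x, hx.1, hfx⟩

lemma std_tail (q p : ℝ) (hq : stdCDF q = p) (hp0 : 0 ≤ p) (hp1 : p ≤ 1) :
    gaussianReal 0 1 {z : ℝ | q < |z|} ≤ ENNReal.ofReal (2*(1-p)) := by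
  set μ := gaussianReal 0 1 with hμ
  have hsub : {z : ℝ | q < |z|} ⊆ Set.Iic (-q) ∪ Set.Ioi q := by
    intro z hz
    rcases lt_abs.mp (show q < |z| from hz) with h | h
    · exact Or.inr h
    · exact Or.inl (by simp only [Set.mem_Iic]; linarith)
  have hIoi : μ (Set.Ioi q) = 1 - ENNReal.ofReal p := by
    have h := measure_add_measure_compl (μ := μ) (measurableSet_Iic (a := q))
    rw [Set.compl_Iic, measure_univ, hμ, stdCDF_measure_Iic, hq] at h
    exact ENNReal.eq_sub_of_add_eq (by simp) (by rw [add_comm]; exact h)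
  have hIci : μ (Set.Ici q) ≤ μ (Set.Ioi q) := by
    calc μ (Set.Ici q) ≤ μ (Set.Ioi q ∪ {q}) := by
          apply measure_mono; intro x hx
          rcases lt_or_eq_of_le (Set.mem_Ici.mp hx) with h | h
          · exact Or.inl h
          · exact Or.inr (by simp [← h])
      _ ≤ μ (Set.Ioi q) + μ {q} := measure_union_le _ _
      _ = μ (Set.Ioi q) := by rw [hμ, gaussP_singleton, add_zero]
  calc μ {z : ℝ | q < |z|} ≤ μ (Set.Iic (-q) ∪ Set.Ioi q) := measure_mono hsub
    _ ≤ μ (Set.Iic (-q)) + μ (Set.Ioi q) := measure_union_le _ _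
    _ = μ (Set.Ici q) + μ (Set.Ioi q) := by rw [hμ, gauss_Iic_neg]
    _ ≤ μ (Set.Ioi q) + μ (Set.Ioi q) := add_le_add_left hIci _
    _ = (1 - ENNReal.ofReal p) + (1 - ENNReal.ofReal p) := by rw [hIoi]
    _ ≤ ENNReal.ofReal (2*(1-p)) := by
        have he : (1:ℝ≥0∞) - ENNReal.ofReal p = ENNReal.ofReal (1-p) := by
          rw [← ENNReal.ofReal_one, ← ENNReal.ofReal_sub _ hp0]
        rw [he, ← ENNReal.ofReal_add (by linarith) (by linarith)]
        apply le_of_eq; congr 1; ring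

lemma gauss_tail_scaled (v : ℝ≥0) (q c p : ℝ) (hq : 0 ≤ q)
    (hc : Real.sqrt v * q ≤ c) (hcdf : stdCDF q = p) (hp0 : 0 ≤ p) (hp1 : p ≤ 1) :
    gaussianReal 0 v {t : ℝ | c < |t|} ≤ ENNReal.ofReal (2*(1-p)) := by
  have hset : MeasurableSet {t : ℝ | c < |t|} :=
    measurableSet_lt measurable_const continuous_abs.measurable
  by_cases hv : v = 0
  · subst hv
    rw [gaussianReal_zero_var, Measure.dirac_apply' _ hset]
    have hc0 : (0:ℝ) ≤ c := by
      have : Real.sqrt ((0:ℝ≥0) : ℝ) * q = 0 := by simp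
      linarith [hc, this]
    have h0 : (0:ℝ) ∉ {t : ℝ | c < |t|} := by simp; linarith
    rw [Set.indicator_of_notMem h0]
    exact zero_le
  · have hvpos : (0:ℝ) < (v:ℝ) := by exact_mod_cast pos_iff_ne_zero.mpr hv
    have hsq : (0:ℝ) < Real.sqrt v := Real.sqrt_pos.mpr hvpos
    have hmap := gaussianReal_map_const_mul (μ := 0) (v := 1) (Real.sqrt v)
    have hvv : (NNReal.mk ((Real.sqrt v)^2) (sq_nonneg _)) * 1 = v := by
      apply NNReal.coe_injective
      rw [NNReal.coe_mul, NNReal.coe_mk, NNReal.coe_one, mul_one, Real.sq_sqrt v.coe_nonneg]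
    rw [hvv, mul_zero] at hmap
    rw [← hmap, Measure.map_apply (measurable_const_mul _) hset]
    have hsub : ((Real.sqrt v * ·) ⁻¹' {t : ℝ | c < |t|}) ⊆ {z : ℝ | q < |z|} := by
      intro z hz
      simp only [Set.mem_preimage, Set.mem_setOf_eq, abs_mul,
        abs_of_nonneg hsq.le] at hz
      have h1 : Real.sqrt v * q < Real.sqrt v * |z| := lt_of_le_of_lt hc hz
      exact lt_of_mul_lt_mul_left h1 hsq.le
    exact le_trans (measure_mono hsub) (std_tail q p hcdf hp0 hp1)

section Proj

variable {n : ℕ} (hn : 1 ≤ n) {F : Submodule ℝ (Fin n → ℝ)}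
  {P : (Fin n → ℝ) →ₗ[ℝ] (Fin n → ℝ)}

lemma single_eq_sum (y : Fin n → ℝ) : y = ∑ j, y j • (Pi.single j 1 : Fin n → ℝ) := by
  funext k
  rw [Finset.sum_apply]
  simp only [Pi.smul_apply, Pi.single_apply, smul_eq_mul, mul_ite, mul_one, mul_zero]
  rw [Finset.sum_ite_eq]
  simp

lemma proj_expand (y : Fin n → ℝ) (i : Fin n) :
    P y i = ∑ j, P (Pi.single j 1) i * y j := by
  conv_lhs => rw [single_eq_sum y]
  rw [map_sum]
  rw [Finset.sum_apply]
  apply Finset.sum_congr rfl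
  intro j _
  rw [LinearMap.map_smul, Pi.smul_apply, smul_eq_mul, mul_comm]

lemma inner2_sum_eq_zero (hn : 1 ≤ n) {u v : Fin n → ℝ} (h : inner2 n u v = 0) :
    ∑ k, u k * v k = 0 := by
  rw [inner2, div_eq_zero_iff] at h
  rcases h with h | h
  · exact h
  · exfalso
    have : (0:ℝ) < n := by exact_mod_cast hn
    simp at h
    omega

lemma proj_fixed (hP : IsOrthProjOn n F P) (hn : 1 ≤ n) {g : Fin n → ℝ} (hg : g ∈ F) :
    P g = g := by
  have hmem : g - P g ∈ F := Submodule.sub_mem F hg (hP.1 g)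
  have h := inner2_sum_eq_zero hn (hP.2 g (g - P g) hmem)
  have hz : ∀ k, (g - P g) k = 0 := by
    intro k
    have hsum := (Finset.sum_eq_zero_iff_of_nonneg
      (fun k _ => mul_self_nonneg ((g - P g) k))).mp h k (Finset.mem_univ k)
    exact mul_self_eq_zero.mp hsum
  funext k
  have := hz k
  rw [Pi.sub_apply] at this
  linarith

lemma proj_symm (hP : IsOrthProjOn n F P) (hn : 1 ≤ n) (i j : Fin n) :
    P (Pi.single j 1) i = P (Pi.single i 1) j := by
  have key : ∀ u w : Fin n → ℝ, ∑ k, u k * P w k = ∑ k, P u k * P w k := by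
    intro u w
    have h := inner2_sum_eq_zero hn (hP.2 u (P w) (hP.1 w))
    have : ∑ k, (u k * P w k - P u k * P w k) = 0 := by
      rw [← h]
      apply Finset.sum_congr rfl
      intro k _
      rw [Pi.sub_apply]
      ring
    rw [Finset.sum_sub_distrib] at this
    linarith
  have hsingle : ∀ (m : Fin n) (w : Fin n → ℝ), ∑ k, (Pi.single m 1 : Fin n → ℝ) k * w k = w m := by
    intro m w
    rw [Finset.sum_eq_single m]
    · rw [Pi.single_eq_same, one_mul]
    · intro b _ hb
      rw [Pi.single_eq_of_ne hb, zero_mul]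
    · intro hm
      exact absurd (Finset.mem_univ m) hm
  have h1 : P (Pi.single i 1) j = ∑ k, P (Pi.single j 1) k * P (Pi.single i 1) k := by
    rw [← key, hsingle]
  have h2 : P (Pi.single j 1) i = ∑ k, P (Pi.single i 1) k * P (Pi.single j 1) k := by
    rw [← key, hsingle]
  rw [h1, h2]
  apply Finset.sum_congr rfl
  intro k _
  ring

lemma sqrt_le_Omega (hn : 1 ≤ n) (i : Fin n) :
    Real.sqrt (∑ j, (P (Pi.single i 1) j)^2) ≤ OmegaF n P := by
  have hnpos : (0:ℝ) < n := by exact_mod_cast hn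
  have hratio : norm2 n (P (Pi.single i 1)) / norm2 n (Pi.single i 1)
      = Real.sqrt (∑ j, (P (Pi.single i 1) j)^2) := by
    have hden : (∑ j, ((Pi.single i 1 : Fin n → ℝ) j)^2) = 1 := by
      have : ∀ j, ((Pi.single i 1 : Fin n → ℝ) j)^2 = if j = i then 1 else 0 := by
        intro j
        rw [Pi.single_apply]
        split <;> norm_num
      simp only [this]
      rw [Finset.sum_ite_eq' Finset.univ i (fun _ => (1:ℝ))]
      simp
    rw [norm2, norm2, hden]
    rw [Real.sqrt_div (by positivity), Real.sqrt_div (by norm_num)]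
    have hsn : Real.sqrt n ≠ 0 := by positivity
    rw [Real.sqrt_one]
    field_simp
  rw [← hratio, OmegaF]
  apply le_ciSup (f := fun i : Fin n => norm2 n (P (Pi.single i 1)) / norm2 n (Pi.single i 1))
  exact (Set.finite_range _).bddAbove

end Proj


/-- the projection band `ΠY ± σ·Ω_F·Φ⁻¹(1−α/(2n))` has coverage at
least `1 − α` uniformly over `f ∈ F`. -/
theorem projection_band_coverage (n : ℕ) (hn : 1 ≤ n) (σ : ℝ) (hσ : 0 < σ)
    (α : ℝ) (hα : 0 < α) (hα1 : α < 1)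
    (F : Submodule ℝ (Fin n → ℝ))
    (P : (Fin n → ℝ) →ₗ[ℝ] (Fin n → ℝ)) (hP : IsOrthProjOn n F P)
    (f : Fin n → ℝ) (hf : f ∈ F) :
    ENNReal.ofReal (1 - α) ≤
      gaussP n f σ
        {y | ∀ i, |P y i - f i| ≤ σ * OmegaF n P * PhiInv (1 - α / (2 * n))} := by
  haveI : IsProbabilityMeasure (gaussP n f σ) := by unfold gaussP; infer_instance
  have hnpos : (0:ℝ) < n := by exact_mod_cast hn
  have hn1 : (1:ℝ) ≤ n := by exact_mod_cast hn
  set p : ℝ := 1 - α / (2 * n) with hp_def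
  have h2npos : (0:ℝ) < 2 * n := by linarith
  have hfrac_pos : 0 < α / (2*n) := by positivity
  have hfrac_lt : α / (2*n) < 1/2 := by
    rw [div_lt_iff₀ h2npos]
    nlinarith
  have hp_half : 1/2 < p := by rw [hp_def]; linarith
  have hp1 : p < 1 := by rw [hp_def]; linarith
  have hp0' : 0 ≤ p := le_trans (by norm_num) hp_half.le
  obtain ⟨x₀, hx₀0, hx₀⟩ := exists_stdCDF_eq p hp_half.le hp1
  have hqcdf : stdCDF (PhiInv p) = p := Function.invFun_eq ⟨x₀, hx₀⟩
  set q := PhiInv p with hq_def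
  have hq0 : 0 ≤ q := by
    by_contra hneg
    push_neg at hneg
    have := monotone_stdCDF hneg.le
    rw [stdCDF_zero, hqcdf] at this
    linarith
  set Ω := OmegaF n P with hΩ_def
  set c := σ * Ω * q with hc_def
  set a : Fin n → Fin n → ℝ := fun i j => P (Pi.single j 1) i with ha_def
  have hPy : ∀ (y : Fin n → ℝ) i, P y i = ∑ j, a i j * y j := fun y i => proj_expand y i
  have hΩ0 : 0 ≤ Ω := le_trans (Real.sqrt_nonneg _) (sqrt_le_Omega hn ⟨0, hn⟩)
  -- per-coordinate bound
  have hsetmeas : ∀ i : Fin n, MeasurableSet {t : ℝ | c < |t - f i|} := fun i =>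
    measurableSet_lt measurable_const ((continuous_id.sub continuous_const).abs.measurable)
  have hcoord : ∀ i, gaussP n f σ {y | c < |P y i - f i|} ≤ ENNReal.ofReal (2*(1-p)) := by
    intro i
    have hseteq : {y : Fin n → ℝ | c < |P y i - f i|}
        = (fun y : Fin n → ℝ => ∑ j, a i j * y j) ⁻¹' {t : ℝ | c < |t - f i|} := by
      ext y
      simp only [Set.mem_setOf_eq, Set.mem_preimage]
      rw [hPy y i]
    rw [hseteq]
    unfold gaussP
    rw [← Measure.map_apply (measurable_lin _) (hsetmeas i), gauss_pi_lin]
    have hmean : ∑ j, a i j * f j = f i := by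
      have h1 := hPy f i
      rw [proj_fixed hP hn hf] at h1
      linarith
    rw [hmean]
    set V : ℝ≥0 := Real.toNNReal (∑ j, (a i j) ^ 2) * Real.toNNReal (σ^2) with hV_def
    have hshift := gaussianReal_map_add_const (μ := 0) (v := V) (f i)
    rw [zero_add] at hshift
    rw [← hshift, Measure.map_apply (measurable_add_const _) (hsetmeas i)]
    have hpre : ((· + f i) ⁻¹' {t : ℝ | c < |t - f i|}) = {t : ℝ | c < |t|} := by
      ext t; simp
    rw [hpre]
    apply gauss_tail_scaled V q c p hq0 _ hqcdf hp0' hp1.le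
    -- √V * q ≤ c
    have hVeq : Real.sqrt (V : ℝ) = Real.sqrt (∑ j, (a i j)^2) * σ := by
      rw [hV_def, NNReal.coe_mul, Real.coe_toNNReal _ (by positivity),
        Real.coe_toNNReal _ (sq_nonneg σ),
        Real.sqrt_mul (by positivity), Real.sqrt_sq hσ.le]
    rw [hVeq]
    have hrow : ∑ j, (a i j)^2 = ∑ j, (P (Pi.single i 1) j)^2 :=
      Finset.sum_congr rfl (fun j _ => by
        have haij : a i j = P (Pi.single i 1) j := proj_symm hP hn i j
        rw [haij])
    have hle : Real.sqrt (∑ j, (a i j)^2) ≤ Ω := by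
      rw [hrow]; exact sqrt_le_Omega hn i
    have hsq0 : 0 ≤ Real.sqrt (∑ j, (a i j)^2) := Real.sqrt_nonneg _
    have h1 : σ * Real.sqrt (∑ j, (a i j)^2) ≤ σ * Ω := mul_le_mul_of_nonneg_left hle hσ.le
    have h2 : (σ * Real.sqrt (∑ j, (a i j)^2)) * q ≤ (σ * Ω) * q :=
      mul_le_mul_of_nonneg_right h1 hq0
    calc Real.sqrt (∑ j, (a i j)^2) * σ * q
        = (σ * Real.sqrt (∑ j, (a i j)^2)) * q := by ring
      _ ≤ (σ * Ω) * q := h2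
      _ = c := by rw [hc_def]
  -- event measurability
  have hEmeas : MeasurableSet {y : Fin n → ℝ | ∀ i, |P y i - f i| ≤ c} := by
    have heq : {y : Fin n → ℝ | ∀ i, |P y i - f i| ≤ c}
        = ⋂ i, (fun y : Fin n → ℝ => ∑ j, a i j * y j) ⁻¹' {t : ℝ | |t - f i| ≤ c} := by
      ext y
      simp only [Set.mem_setOf_eq, Set.mem_iInter, Set.mem_preimage]
      constructor
      · intro h i; rw [← hPy y i]; exact h i
      · intro h i; rw [hPy y i]; exact h i
    rw [heq]
    exact MeasurableSet.iInter fun i => (measurable_lin _)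
      (measurableSet_le ((continuous_id.sub continuous_const).abs.measurable) measurable_const)
  have hcompl : {y : Fin n → ℝ | ∀ i, |P y i - f i| ≤ c}ᶜ
      = ⋃ i, {y : Fin n → ℝ | c < |P y i - f i|} := by
    ext y
    simp only [Set.mem_compl_iff, Set.mem_setOf_eq, Set.mem_iUnion, not_forall, not_le]
  have hcompl_le : gaussP n f σ {y : Fin n → ℝ | ∀ i, |P y i - f i| ≤ c}ᶜ
      ≤ ENNReal.ofReal α := by
    rw [hcompl]
    calc gaussP n f σ (⋃ i, {y : Fin n → ℝ | c < |P y i - f i|})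
        ≤ ∑' i : Fin n, gaussP n f σ {y : Fin n → ℝ | c < |P y i - f i|} :=
          measure_iUnion_le _
      _ ≤ ∑' i : Fin n, ENNReal.ofReal (2*(1-p)) := ENNReal.tsum_le_tsum hcoord
      _ = (n : ℝ≥0∞) * ENNReal.ofReal (2*(1-p)) := by
          rw [tsum_fintype]
          simp [Finset.card_univ, mul_comm]
      _ = ENNReal.ofReal α := by
          rw [← ENNReal.ofReal_natCast n, ← ENNReal.ofReal_mul (by positivity)]
          congr 1
          rw [hp_def]
          field_simp
          ring
  -- conclude
  by_contra hcon
  push_neg at hcon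
  have hsum := measure_add_measure_compl (μ := gaussP n f σ) hEmeas
  rw [measure_univ] at hsum
  have hlt : gaussP n f σ {y : Fin n → ℝ | ∀ i, |P y i - f i| ≤ c}
      + gaussP n f σ {y : Fin n → ℝ | ∀ i, |P y i - f i| ≤ c}ᶜ
      < ENNReal.ofReal (1-α) + ENNReal.ofReal α :=
    ENNReal.add_lt_add_of_lt_of_le (by finiteness) hcon hcompl_le
  rw [hsum, ← ENNReal.ofReal_add (by linarith) hα.le] at hlt
  simp at hlt

end
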